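/- (Doubly optimal) Let b*_t(s,a) = q_{π,t}(s,a). For every baseline function b, every behavior policy μ ∈ Λ^b, every time t, and every state s: Var( G^{b*}(τ^{μ^{*,b*}}_{t:T−1}) | S_t = s ) ≤ Var( G^b(τ^μ_{t:T−1}) | S_t = s ); i.e., the pair (μ^{*,b*}, b*) solves the bi-level optimization min over baselines b and behavior policies μ ∈ Λ^b of the conditional variance of the estimator. -/

import Mathlib

open Finset

namespace DOpt

variable {S A : Type}

/-- A time-indexed policy: for each time step and state, a probability distribution on actions. -/
def IsPolicy [Fintype A] (μ : ℕ → S → A → ℝ) : Prop :=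
  ∀ t s, (∀ a, 0 ≤ μ t s a) ∧ ∑ a, μ t s a = 1

/-- A transition probability kernel on the finite state space. -/
def IsKernel [Fintype S] (p : S → A → S → ℝ) : Prop :=
  ∀ s a, (∀ s', 0 ≤ p s a s') ∧ ∑ s', p s a s' = 1

/-- Action value `q_{π,t}(s,a)` computed with `n` remaining transitions after time `t`
(`n = T - 1 - t` in a horizon-`T` MDP). -/
noncomputable def qval [Fintype S] [Fintype A] (p : S → A → S → ℝ) (π : ℕ → S → A → ℝ)
    (r : S → A → ℝ) : ℕ → ℕ → S → A → ℝ
  | 0, _, s, a => r s a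
  | n + 1, t, s, a =>
      r s a + ∑ s', p s a s' * ∑ a', π (t + 1) s' a' * qval p π r n (t + 1) s' a'

/-- `q_{π,t}(s,a)` in the horizon-`T` MDP. -/
noncomputable def qf [Fintype S] [Fintype A] (T : ℕ) (p : S → A → S → ℝ)
    (π : ℕ → S → A → ℝ) (r : S → A → ℝ) (t : ℕ) (s : S) (a : A) : ℝ :=
  qval p π r (T - 1 - t) t s a

/-- `v_{π,t}(s) = Σ_a π_t(a|s) q_{π,t}(s,a)`. -/
noncomputable def vf [Fintype S] [Fintype A] (T : ℕ) (p : S → A → S → ℝ)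
    (π : ℕ → S → A → ℝ) (r : S → A → ℝ) (t : ℕ) (s : S) : ℝ :=
  ∑ a, π t s a * qf T p π r t s a

/-- `ν_{π,t}(s,a) = Var_{s' ∼ p(·|s,a)}(v_{π,t+1}(s'))` for `t ≤ T-2`, and `0` at `t = T-1`. -/
noncomputable def nuf [Fintype S] [Fintype A] (T : ℕ) (p : S → A → S → ℝ)
    (π : ℕ → S → A → ℝ) (r : S → A → ℝ) (t : ℕ) (s : S) (a : A) : ℝ :=
  if t + 2 ≤ T then
    (∑ s', p s a s' * (vf T p π r (t + 1) s') ^ 2) -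
      (∑ s', p s a s' * vf T p π r (t + 1) s') ^ 2
  else 0

/-- Trajectories with `n` further transitions after the first action:
`(a_t, s_{t+1}, a_{t+1}, …, s_{t+n}, a_{t+n})`. -/
def Traj (S A : Type) : ℕ → Type
  | 0 => A
  | n + 1 => A × S × Traj S A n

/-- Expectation, over trajectories generated by the behavior policy `μ` starting at time `t`
in state `s` with `n` further transitions, of a function `f` of the trajectory. -/
noncomputable def Exp [Fintype S] [Fintype A] (p : S → A → S → ℝ) (μ : ℕ → S → A → ℝ) :
    (n : ℕ) → ℕ → S → (Traj S A n → ℝ) → ℝ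
  | 0, t, s, f => ∑ a, μ t s a * f a
  | n + 1, t, s, f =>
      ∑ a, μ t s a * ∑ s', p s a s' * Exp p μ n (t + 1) s' (fun τ => f (a, s', τ))

/-- Conditional variance of a function of the trajectory, given `S_t = s`. -/
noncomputable def Var [Fintype S] [Fintype A] (p : S → A → S → ℝ) (μ : ℕ → S → A → ℝ)
    (n : ℕ) (t : ℕ) (s : S) (f : Traj S A n → ℝ) : ℝ :=
  Exp p μ n t s (fun τ => (f τ) ^ 2) - (Exp p μ n t s f) ^ 2

/-- `b̄_t(s) = Σ_a π_t(a|s) b_t(s,a)`. -/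
noncomputable def bbar [Fintype A] (π : ℕ → S → A → ℝ) (b : ℕ → S → A → ℝ)
    (t : ℕ) (s : S) : ℝ :=
  ∑ a, π t s a * b t s a

/-- The per-decision importance-sampling estimator `G^b` with baseline `b`, target policy `π`
and behavior policy `μ`, as a function of the trajectory from time `t` (with `n` further
transitions, `n = T - 1 - t`). -/
noncomputable def Gest [Fintype S] [Fintype A] (π μ : ℕ → S → A → ℝ) (r : S → A → ℝ)
    (b : ℕ → S → A → ℝ) : (n : ℕ) → ℕ → S → Traj S A n → ℝ
  | 0, t, s, a => (π t s a / μ t s a) * (r s a - b t s a) + bbar π b t s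
  | n + 1, t, s, (a, s', τ) =>
      (π t s a / μ t s a) * (r s a + Gest π μ r b n (t + 1) s' τ - b t s a) + bbar π b t s

/-- Normalization of a weight vector into a probability distribution; the uniform distribution
when the total weight vanishes. -/
noncomputable def normPol [Fintype A] (w : A → ℝ) (a : A) : ℝ :=
  if (∑ a', w a') = 0 then ((Fintype.card A : ℝ))⁻¹ else w a / ∑ a', w a'

/-- `u_{π,t}(s,a)` (with baseline `b`), defined backwards in time together with the optimal
behavior policy `μ*`; the first argument is the number `n = T - 1 - t` of remaining
transitions after time `t`. -/
noncomputable def uAux [Fintype S] [Fintype A] (T : ℕ) (p : S → A → S → ℝ)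
    (π : ℕ → S → A → ℝ) (r : S → A → ℝ) (b : ℕ → S → A → ℝ) :
    ℕ → ℕ → S → A → ℝ
  | 0, t, s, a => (qf T p π r t s a - b t s a) ^ 2
  | n + 1, t, s, a =>
      (qf T p π r t s a - b t s a) ^ 2 + nuf T p π r t s a +
        ∑ s', p s a s' *
          Var p
            (fun t' s₁ a₁ => normPol (fun a₂ =>
              π t' s₁ a₂ * Real.sqrt (uAux T p π r b (n - (t' - (t + 1))) t' s₁ a₂)) a₁)
            n (t + 1) s'
            (Gest π
              (fun t' s₁ a₁ => normPol (fun a₂ =>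
                π t' s₁ a₂ * Real.sqrt (uAux T p π r b (n - (t' - (t + 1))) t' s₁ a₂)) a₁)
              r b n (t + 1) s')
  termination_by n => n
  decreasing_by all_goals omega

/-- `u_{π,t}(s,a)` in the horizon-`T` MDP, with baseline `b`. -/
noncomputable def uf [Fintype S] [Fintype A] (T : ℕ) (p : S → A → S → ℝ)
    (π : ℕ → S → A → ℝ) (r : S → A → ℝ) (b : ℕ → S → A → ℝ) (t : ℕ) (s : S) (a : A) : ℝ :=
  uAux T p π r b (T - 1 - t) t s a

/-- The optimal behavior policy `μ*_t(a|s) ∝ π_t(a|s) √(u_{π,t}(s,a))` tailored to the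
baseline `b` (uniform when all the weights vanish). -/
noncomputable def mustar [Fintype S] [Fintype A] (T : ℕ) (p : S → A → S → ℝ)
    (π : ℕ → S → A → ℝ) (r : S → A → ℝ) (b : ℕ → S → A → ℝ) (t : ℕ) (s : S) (a : A) : ℝ :=
  normPol (fun a' => π t s a' * Real.sqrt (uf T p π r b t s a')) a

/-- Conditional expectation `E[G^b(τ^μ_{t:T-1}) | S_t = s]`. -/
noncomputable def ExpG [Fintype S] [Fintype A] (T : ℕ) (p : S → A → S → ℝ)
    (π μ : ℕ → S → A → ℝ) (r : S → A → ℝ) (b : ℕ → S → A → ℝ) (t : ℕ) (s : S) : ℝ :=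
  Exp p μ (T - 1 - t) t s (Gest π μ r b (T - 1 - t) t s)

/-- Conditional variance `Var(G^b(τ^μ_{t:T-1}) | S_t = s)`. -/
noncomputable def VarG [Fintype S] [Fintype A] (T : ℕ) (p : S → A → S → ℝ)
    (π μ : ℕ → S → A → ℝ) (r : S → A → ℝ) (b : ℕ → S → A → ℝ) (t : ℕ) (s : S) : ℝ :=
  Var p μ (T - 1 - t) t s (Gest π μ r b (T - 1 - t) t s)

/-- Membership in the enlarged policy-search space
`Λ = {μ : ∀ t,s,a, μ_t(a|s) = 0 → π_t(a|s)·u_{π,t}(s,a) = 0}`. -/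
def inLambda [Fintype S] [Fintype A] (T : ℕ) (p : S → A → S → ℝ)
    (π : ℕ → S → A → ℝ) (r : S → A → ℝ) (b : ℕ → S → A → ℝ) (μ : ℕ → S → A → ℝ) : Prop :=
  ∀ t s a, t < T → μ t s a = 0 → π t s a * uf T p π r b t s a = 0


/-- The optimal baseline `b*_t(s,a) = q_{π,t}(s,a)`. -/
noncomputable def bstar [Fintype S] [Fintype A] (T : ℕ) (p : S → A → S → ℝ)
    (π : ℕ → S → A → ℝ) (r : S → A → ℝ) : ℕ → S → A → ℝ :=
  fun t s a => qf T p π r t s a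

/-- The zero baseline: with it, `Gest` is the plain PDIS estimator `G^{PDIS}`. -/
def zerob : ℕ → S → A → ℝ := fun _ _ _ => 0

section ProofAux



variable {S A : Type} [Fintype S] [Fintype A]

lemma Exp_zero (p : S → A → S → ℝ) (μ : ℕ → S → A → ℝ) (t : ℕ) (s : S) (f : Traj S A 0 → ℝ) :
    Exp p μ 0 t s f = ∑ a, μ t s a * f a := rfl

lemma Exp_succ (p : S → A → S → ℝ) (μ : ℕ → S → A → ℝ) (n t : ℕ) (s : S)
    (f : Traj S A (n+1) → ℝ) :
    Exp p μ (n+1) t s f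
      = ∑ a, μ t s a * ∑ s', p s a s' * Exp p μ n (t+1) s' (fun τ => f (a, s', τ)) := rfl

lemma Gest_zero (π μ : ℕ → S → A → ℝ) (r : S → A → ℝ) (b : ℕ → S → A → ℝ) (t : ℕ) (s : S)
    (a : A) :
    Gest π μ r b 0 t s a = (π t s a / μ t s a) * (r s a - b t s a) + bbar π b t s := rfl

lemma Gest_succ (π μ : ℕ → S → A → ℝ) (r : S → A → ℝ) (b : ℕ → S → A → ℝ) (n t : ℕ) (s : S)
    (a : A) (s' : S) (τ : Traj S A n) :
    Gest π μ r b (n+1) t s (a, s', τ)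
      = (π t s a / μ t s a) * (r s a + Gest π μ r b n (t+1) s' τ - b t s a) + bbar π b t s := rfl

lemma uAux_zero (T : ℕ) (p : S → A → S → ℝ) (π : ℕ → S → A → ℝ) (r : S → A → ℝ)
    (b : ℕ → S → A → ℝ) (t : ℕ) (s : S) (a : A) :
    uAux T p π r b 0 t s a = (qf T p π r t s a - b t s a) ^ 2 := by
  rw [uAux]

lemma uAux_succ' (T : ℕ) (p : S → A → S → ℝ) (π : ℕ → S → A → ℝ) (r : S → A → ℝ)
    (b : ℕ → S → A → ℝ) (n t : ℕ) (s : S) (a : A) :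
    uAux T p π r b (n+1) t s a =
      (qf T p π r t s a - b t s a) ^ 2 + nuf T p π r t s a +
        ∑ s', p s a s' *
          Var p
            (fun t' s₁ a₁ => normPol (fun a₂ =>
              π t' s₁ a₂ * Real.sqrt (uAux T p π r b (n - (t' - (t + 1))) t' s₁ a₂)) a₁)
            n (t + 1) s'
            (Gest π
              (fun t' s₁ a₁ => normPol (fun a₂ =>
                π t' s₁ a₂ * Real.sqrt (uAux T p π r b (n - (t' - (t + 1))) t' s₁ a₂)) a₁)
              r b n (t + 1) s') := by
  rw [uAux]

end ProofAux
section AlgAux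

variable {ι : Type} [Fintype ι]

/-- Jensen / Cauchy-Schwarz: second moment dominates squared mean. -/
lemma sq_sum_le {w f : ι → ℝ} (hw : ∀ i, 0 ≤ w i) (h1 : ∑ i, w i = 1) :
    (∑ i, w i * f i) ^ 2 ≤ ∑ i, w i * f i ^ 2 := by
  have h := Finset.sum_mul_sq_le_sq_mul_sq Finset.univ (fun i => Real.sqrt (w i))
    (fun i => Real.sqrt (w i) * f i)
  calc (∑ i, w i * f i) ^ 2
      = (∑ i, Real.sqrt (w i) * (Real.sqrt (w i) * f i)) ^ 2 := by
        congr 1; refine Finset.sum_congr rfl fun i _ => ?_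
        rw [← mul_assoc, Real.mul_self_sqrt (hw i)]
    _ ≤ (∑ i, Real.sqrt (w i) ^ 2) * ∑ i, (Real.sqrt (w i) * f i) ^ 2 := h
    _ = ∑ i, w i * f i ^ 2 := by
        have e1 : ∑ i, Real.sqrt (w i) ^ 2 = (1:ℝ) := by
          rw [← h1]; exact Finset.sum_congr rfl fun i _ => Real.sq_sqrt (hw i)
        rw [e1, one_mul]
        refine Finset.sum_congr rfl fun i _ => ?_
        rw [mul_pow, Real.sq_sqrt (hw i)]

/-- Cauchy-Schwarz in importance-sampling form. -/
lemma sq_sum_le_div {w g : ι → ℝ} (hw : ∀ i, 0 ≤ w i) (h1 : ∑ i, w i ≤ 1)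
    (hz : ∀ i, w i = 0 → g i = 0) :
    (∑ i, g i) ^ 2 ≤ ∑ i, g i ^ 2 / w i := by
  have key : ∀ i, Real.sqrt (w i) * (g i / Real.sqrt (w i)) = g i := by
    intro i
    rcases eq_or_lt_of_le (hw i) with h | h
    · rw [hz i h.symm]; simp
    · rw [mul_comm, div_mul_cancel₀]
      exact (Real.sqrt_ne_zero').2 h
  have h := Finset.sum_mul_sq_le_sq_mul_sq Finset.univ (fun i => Real.sqrt (w i))
    (fun i => g i / Real.sqrt (w i))
  have hnn : (0:ℝ) ≤ ∑ i, g i ^ 2 / w i :=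
    Finset.sum_nonneg fun i _ => div_nonneg (sq_nonneg _) (hw i)
  calc (∑ i, g i) ^ 2 = (∑ i, Real.sqrt (w i) * (g i / Real.sqrt (w i))) ^ 2 := by
        congr 1; exact (Finset.sum_congr rfl fun i _ => (key i)).symm
    _ ≤ (∑ i, Real.sqrt (w i) ^ 2) * ∑ i, (g i / Real.sqrt (w i)) ^ 2 := h
    _ = (∑ i, w i) * ∑ i, g i ^ 2 / w i := by
        congr 1
        · exact Finset.sum_congr rfl fun i _ => Real.sq_sqrt (hw i)
        · refine Finset.sum_congr rfl fun i _ => ?_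
          rw [div_pow, Real.sq_sqrt (hw i)]
    _ ≤ 1 * ∑ i, g i ^ 2 / w i := by
        exact mul_le_mul_of_nonneg_right h1 hnn
    _ = ∑ i, g i ^ 2 / w i := one_mul _

/-- Minkowski-type inequality in ℝ². -/
lemma minkowski_sq {w x y : ι → ℝ} (hw : ∀ i, 0 ≤ w i) (hx : ∀ i, 0 ≤ x i)
    (hy : ∀ i, 0 ≤ y i) :
    (∑ i, w i * Real.sqrt (x i)) ^ 2 + (∑ i, w i * Real.sqrt (y i)) ^ 2
      ≤ (∑ i, w i * Real.sqrt (x i + y i)) ^ 2 := by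
  set P := ∑ i, w i * Real.sqrt (x i) with hP
  set Q := ∑ i, w i * Real.sqrt (y i) with hQ
  set R := ∑ i, w i * Real.sqrt (x i + y i) with hR
  have hR0 : 0 ≤ R := Finset.sum_nonneg fun i _ => mul_nonneg (hw i) (Real.sqrt_nonneg _)
  rcases eq_or_ne (P ^ 2 + Q ^ 2) 0 with h | h
  · exact le_trans (le_of_eq h) (sq_nonneg R)
  · have hPQ : 0 < P ^ 2 + Q ^ 2 := lt_of_le_of_ne (by positivity) (Ne.symm h)
    set D := Real.sqrt (P ^ 2 + Q ^ 2) with hD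
    have hD0 : 0 < D := Real.sqrt_pos.2 hPQ
    have hDD : D * D = P ^ 2 + Q ^ 2 := Real.mul_self_sqrt hPQ.le
    have hptw : ∀ i, (P / D) * Real.sqrt (x i) + (Q / D) * Real.sqrt (y i)
        ≤ Real.sqrt (x i + y i) := by
      intro i
      rcases le_or_gt ((P / D) * Real.sqrt (x i) + (Q / D) * Real.sqrt (y i)) 0 with hle | hpos
      · exact le_trans hle (Real.sqrt_nonneg _)
      · have hcs : (P / D) ^ 2 + (Q / D) ^ 2 = 1 := by
          field_simp
          linear_combination -hDD
        have hsq : ((P / D) * Real.sqrt (x i) + (Q / D) * Real.sqrt (y i)) ^ 2 ≤ x i + y i := by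
          nlinarith [sq_nonneg ((Q / D) * Real.sqrt (x i) - (P / D) * Real.sqrt (y i)),
            Real.sq_sqrt (hx i), Real.sq_sqrt (hy i), hcs]
        calc (P / D) * Real.sqrt (x i) + (Q / D) * Real.sqrt (y i)
            = Real.sqrt (((P / D) * Real.sqrt (x i) + (Q / D) * Real.sqrt (y i)) ^ 2) := by
              rw [Real.sqrt_sq hpos.le]
          _ ≤ Real.sqrt (x i + y i) := Real.sqrt_le_sqrt hsq
    have key : D ≤ R := by
      have e : D = ∑ i, w i * ((P / D) * Real.sqrt (x i) + (Q / D) * Real.sqrt (y i)) := by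
        have : ∀ i, w i * ((P / D) * Real.sqrt (x i) + (Q / D) * Real.sqrt (y i))
            = (P / D) * (w i * Real.sqrt (x i)) + (Q / D) * (w i * Real.sqrt (y i)) := by
          intro i; ring
        rw [Finset.sum_congr rfl fun i _ => this i, Finset.sum_add_distrib,
          ← Finset.mul_sum, ← Finset.mul_sum, ← hP, ← hQ]
        rw [div_mul_eq_mul_div, div_mul_eq_mul_div, ← add_div, eq_div_iff hD0.ne']
        linear_combination hDD
      rw [e]
      exact Finset.sum_le_sum fun i _ => mul_le_mul_of_nonneg_left (hptw i) (hw i)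
    calc P ^ 2 + Q ^ 2 = D ^ 2 := by linear_combination -hDD
      _ ≤ R ^ 2 := by nlinarith [hD0]

/-- Importance-weighted first moment. -/
lemma sum_rho {μw πw E1 : ι → ℝ} (h : ∀ i, μw i = 0 → πw i * E1 i = 0) :
    ∑ i, μw i * ((πw i / μw i) * E1 i) = ∑ i, πw i * E1 i := by
  refine Finset.sum_congr rfl fun i _ => ?_
  by_cases hμ : μw i = 0
  · rw [hμ, h i hμ]; ring
  · field_simp

end AlgAux
section NormPolAux

variable {S A : Type} [Fintype S] [Fintype A]

lemma normPol_nonneg [Nonempty A] {w : A → ℝ} (hw : ∀ a, 0 ≤ w a) (a : A) :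
    0 ≤ normPol w a := by
  unfold normPol
  split
  · positivity
  · exact div_nonneg (hw a) (Finset.sum_nonneg fun i _ => hw i)

lemma normPol_sum [Nonempty A] (w : A → ℝ) : ∑ a, normPol w a = 1 := by
  unfold normPol
  by_cases h : (∑ a', w a') = 0
  · simp only [h, if_true]
    rw [Finset.sum_const, nsmul_eq_mul, Finset.card_univ, mul_inv_cancel₀]
    exact_mod_cast Fintype.card_ne_zero
  · simp only [h, if_false]
    rw [← Finset.sum_div, div_self h]

lemma normPol_eq_zero [Nonempty A] {w : A → ℝ} (a : A) (h : normPol w a = 0) : w a = 0 := by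
  unfold normPol at h
  by_cases hs : (∑ a', w a') = 0
  · rw [if_pos hs] at h
    refine absurd h ?_
    have hcard : (0:ℝ) < (Fintype.card A : ℝ) := by exact_mod_cast Fintype.card_pos
    positivity
  · rw [if_neg hs] at h
    rcases div_eq_zero_iff.1 h with h' | h'
    · exact h'
    · exact absurd h' hs

private lemma rho_helper (c x E : ℝ) (hc : c ≠ 0) : c * ((x / c) ^ 2 * E) = x ^ 2 * E / c := by
  field_simp

/-- Key identity: the importance-weighted second moment under the optimal policy. -/
lemma sum_rho_sq_eq [Nonempty A] {πw u : A → ℝ} (hπ : ∀ a, 0 ≤ πw a) (hu : ∀ a, 0 ≤ u a) :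
    ∑ a, normPol (fun a' => πw a' * Real.sqrt (u a')) a *
        ((πw a / normPol (fun a' => πw a' * Real.sqrt (u a')) a) ^ 2 * u a)
      = (∑ a, πw a * Real.sqrt (u a)) ^ 2 := by
  set g : A → ℝ := fun a' => πw a' * Real.sqrt (u a') with hg
  have hg0 : ∀ a, 0 ≤ g a := fun a => mul_nonneg (hπ a) (Real.sqrt_nonneg _)
  have hgsq : ∀ a, πw a ^ 2 * u a = g a ^ 2 := by
    intro a
    show πw a ^ 2 * u a = (πw a * Real.sqrt (u a)) ^ 2
    rw [mul_pow, Real.sq_sqrt (hu a)]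
  have hZdef : (∑ a, πw a * Real.sqrt (u a)) = ∑ a', g a' := rfl
  rw [hZdef]
  by_cases hZ : (∑ a', g a') = 0
  · have hz : ∀ a, g a = 0 := by
      intro a
      exact (Finset.sum_eq_zero_iff_of_nonneg (fun i _ => hg0 i)).1 hZ a (Finset.mem_univ a)
    rw [hZ]
    rw [Finset.sum_eq_zero]
    · ring
    · intro a _
      have hc : normPol g a ≠ 0 := by
        unfold normPol
        rw [if_pos hZ]
        have hcard : (0:ℝ) < (Fintype.card A : ℝ) := by exact_mod_cast Fintype.card_pos
        positivity
      rw [rho_helper _ _ _ hc, hgsq a]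
      rw [hz a]
      simp
  · have hterm : ∀ a, normPol g a * ((πw a / normPol g a) ^ 2 * u a) = (∑ a', g a') * g a := by
      intro a
      have hnp : normPol g a = g a / (∑ a', g a') := by unfold normPol; rw [if_neg hZ]
      by_cases hga : g a = 0
      · rw [hnp, hga]
        simp
      · have hc : g a / (∑ a', g a') ≠ 0 := div_ne_zero hga hZ
        rw [hnp, rho_helper _ _ _ hc, hgsq a]
        field_simp
    rw [Finset.sum_congr rfl fun a _ => hterm a, ← Finset.mul_sum]
    ring

end NormPolAux
section ExpAux
set_option linter.unusedSectionVars false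

variable {S A : Type} [Fintype S] [Fintype A]

/-- Policy property on the window of times visited. -/
def PolOn (μ : ℕ → S → A → ℝ) (n t : ℕ) : Prop :=
  ∀ k, k ≤ n → ∀ s : S, (∀ a, 0 ≤ μ (t + k) s a) ∧ ∑ a, μ (t + k) s a = 1

lemma PolOn.succ {μ : ℕ → S → A → ℝ} {n t : ℕ} (h : PolOn μ (n + 1) t) : PolOn μ n (t + 1) := by
  intro k hk s
  have := h (k + 1) (by omega) s
  rwa [show t + (k + 1) = t + 1 + k by omega] at this

lemma PolOn.head {μ : ℕ → S → A → ℝ} {n t : ℕ} (h : PolOn μ n t) (s : S) :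
    (∀ a, 0 ≤ μ t s a) ∧ ∑ a, μ t s a = 1 := by
  have := h 0 (Nat.zero_le _) s
  rwa [Nat.add_zero] at this

lemma polOn_of_isPolicy {μ : ℕ → S → A → ℝ} (h : IsPolicy μ) (n t : ℕ) : PolOn μ n t :=
  fun k _ s => h (t + k) s

lemma sum_affine2 {ι : Type} [Fintype ι] {w : ι → ℝ} (h1 : ∑ i, w i = 1)
    (F G : ι → ℝ) (c₀ c₁ c₂ : ℝ) :
    ∑ i, w i * (c₀ + c₁ * F i + c₂ * G i)
      = c₀ + c₁ * ∑ i, w i * F i + c₂ * ∑ i, w i * G i := by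
  have e : ∀ i, w i * (c₀ + c₁ * F i + c₂ * G i)
      = w i * c₀ + (c₁ * (w i * F i) + c₂ * (w i * G i)) := fun i => by ring
  rw [Finset.sum_congr rfl fun i _ => e i, Finset.sum_add_distrib, Finset.sum_add_distrib,
    ← Finset.sum_mul, h1, one_mul, ← Finset.mul_sum, ← Finset.mul_sum]
  ring

lemma Exp_congr {p : S → A → S → ℝ} {μ μ' : ℕ → S → A → ℝ} :
    ∀ (n t : ℕ), (∀ k (s' : S) (a' : A), μ (t + k) s' a' = μ' (t + k) s' a') →
    ∀ (s : S) (f g : Traj S A n → ℝ), (∀ τ, f τ = g τ) →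
      Exp p μ n t s f = Exp p μ' n t s g
  | 0, t, h, s, f, g, hf => by
      rw [Exp_zero, Exp_zero]
      refine Finset.sum_congr rfl fun a _ => ?_
      have h0 := h 0 s a
      rw [Nat.add_zero] at h0
      rw [h0, hf a]
  | n + 1, t, h, s, f, g, hf => by
      rw [Exp_succ, Exp_succ]
      refine Finset.sum_congr rfl fun a _ => ?_
      have h0 := h 0 s a
      rw [Nat.add_zero] at h0
      rw [h0]
      congr 1
      refine Finset.sum_congr rfl fun s' _ => ?_
      congr 1
      exact Exp_congr n (t + 1)
        (fun k s₁ a₁ => by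
          have := h (k + 1) s₁ a₁
          rwa [show t + (k + 1) = t + 1 + k by omega] at this)
        s' _ _ (fun τ => hf (a, s', τ))

lemma Gest_congr {π : ℕ → S → A → ℝ} {μ μ' : ℕ → S → A → ℝ} {r : S → A → ℝ}
    {b : ℕ → S → A → ℝ} :
    ∀ (n t : ℕ), (∀ k (s' : S) (a' : A), μ (t + k) s' a' = μ' (t + k) s' a') →
    ∀ (s : S) (τ : Traj S A n), Gest π μ r b n t s τ = Gest π μ' r b n t s τ
  | 0, t, h, s, τ => by
      rw [Gest_zero π μ r b t s τ, Gest_zero π μ' r b t s τ]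
      have h0 := h 0 s τ
      rw [Nat.add_zero] at h0
      rw [h0]
  | n + 1, t, h, s, τ => by
      obtain ⟨a, s', τ'⟩ := τ
      rw [Gest_succ, Gest_succ]
      have h0 := h 0 s a
      rw [Nat.add_zero] at h0
      rw [h0]
      have hshift : ∀ k (s₁ : S) (a₁ : A), μ (t + 1 + k) s₁ a₁ = μ' (t + 1 + k) s₁ a₁ := by
        intro k s₁ a₁
        have := h (k + 1) s₁ a₁
        rwa [show t + (k + 1) = t + 1 + k by omega] at this
      rw [Gest_congr n (t + 1) hshift s' τ']

lemma Exp_affine2 {p : S → A → S → ℝ} {μ : ℕ → S → A → ℝ} (hp : IsKernel p) :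
    ∀ (n t : ℕ), PolOn μ n t → ∀ (s : S) (f g : Traj S A n → ℝ) (c₀ c₁ c₂ : ℝ),
      Exp p μ n t s (fun τ => c₀ + c₁ * f τ + c₂ * g τ)
        = c₀ + c₁ * Exp p μ n t s f + c₂ * Exp p μ n t s g
  | 0, t, hpol, s, f, g, c₀, c₁, c₂ => by
      rw [Exp_zero, Exp_zero, Exp_zero]
      exact sum_affine2 (hpol.head s).2 f g c₀ c₁ c₂
  | n + 1, t, hpol, s, f, g, c₀, c₁, c₂ => by
      rw [Exp_succ, Exp_succ, Exp_succ]
      have e1 : ∀ a, ∑ s', p s a s' *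
          Exp p μ n (t + 1) s' (fun τ => c₀ + c₁ * f (a, s', τ) + c₂ * g (a, s', τ))
          = c₀ + c₁ * ∑ s', p s a s' * Exp p μ n (t + 1) s' (fun τ => f (a, s', τ))
              + c₂ * ∑ s', p s a s' * Exp p μ n (t + 1) s' (fun τ => g (a, s', τ)) := by
        intro a
        have e2 : ∀ s', Exp p μ n (t + 1) s'
            (fun τ => c₀ + c₁ * f (a, s', τ) + c₂ * g (a, s', τ))
            = c₀ + c₁ * Exp p μ n (t + 1) s' (fun τ => f (a, s', τ))
                + c₂ * Exp p μ n (t + 1) s' (fun τ => g (a, s', τ)) := fun s' =>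
          Exp_affine2 hp n (t + 1) hpol.succ s' _ _ c₀ c₁ c₂
        rw [Finset.sum_congr rfl fun s' _ => by rw [e2 s']]
        exact sum_affine2 (hp s a).2 _ _ c₀ c₁ c₂
      rw [Finset.sum_congr rfl fun a _ => by rw [e1 a]]
      exact sum_affine2 (hpol.head s).2 _ _ c₀ c₁ c₂

lemma Exp_sq {p : S → A → S → ℝ} {μ : ℕ → S → A → ℝ} (hp : IsKernel p) :
    ∀ (n t : ℕ), PolOn μ n t → ∀ (s : S) (f : Traj S A n → ℝ),
      (Exp p μ n t s f) ^ 2 ≤ Exp p μ n t s (fun τ => f τ ^ 2)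
  | 0, t, hpol, s, f => by
      rw [Exp_zero, Exp_zero]
      exact sq_sum_le (hpol.head s).1 (hpol.head s).2
  | n + 1, t, hpol, s, f => by
      rw [Exp_succ, Exp_succ]
      refine le_trans (sq_sum_le (hpol.head s).1 (hpol.head s).2) ?_
      refine Finset.sum_le_sum fun a _ => ?_
      refine mul_le_mul_of_nonneg_left ?_ ((hpol.head s).1 a)
      refine le_trans (sq_sum_le (hp s a).1 (hp s a).2) ?_
      refine Finset.sum_le_sum fun s' _ => ?_
      refine mul_le_mul_of_nonneg_left ?_ ((hp s a).1 s')
      exact Exp_sq hp n (t + 1) hpol.succ s' _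

end ExpAux
section CohAux
set_option linter.unusedSectionVars false

variable {S A : Type} [Fintype S] [Fintype A]

lemma qf_zero_coh {T t : ℕ} (p : S → A → S → ℝ) (π : ℕ → S → A → ℝ) (r : S → A → ℝ)
    (hcoh : 0 + t + 1 = T) (s : S) (a : A) :
    qf T p π r t s a = r s a := by
  unfold qf
  rw [show T - 1 - t = 0 by omega]
  rfl

lemma qf_succ_coh {T n t : ℕ} (p : S → A → S → ℝ) (π : ℕ → S → A → ℝ) (r : S → A → ℝ)
    (hcoh : (n + 1) + t + 1 = T) (s : S) (a : A) :
    qf T p π r t s a = r s a + ∑ s', p s a s' * vf T p π r (t + 1) s' := by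
  unfold qf
  rw [show T - 1 - t = n + 1 by omega]
  rw [qval]
  congr 1
  refine Finset.sum_congr rfl fun s' _ => ?_
  congr 1
  unfold vf qf
  rw [show T - 1 - (t + 1) = n by omega]

lemma nuf_succ_coh {T n t : ℕ} (p : S → A → S → ℝ) (π : ℕ → S → A → ℝ) (r : S → A → ℝ)
    (hcoh : (n + 1) + t + 1 = T) (s : S) (a : A) :
    nuf T p π r t s a = (∑ s', p s a s' * (vf T p π r (t + 1) s') ^ 2)
      - (∑ s', p s a s' * vf T p π r (t + 1) s') ^ 2 := by
  unfold nuf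
  rw [if_pos (by omega : t + 2 ≤ T)]

lemma nuf_nonneg_coh {T n t : ℕ} {p : S → A → S → ℝ} (π : ℕ → S → A → ℝ) (r : S → A → ℝ)
    (hp : IsKernel p) (hcoh : (n + 1) + t + 1 = T) (s : S) (a : A) :
    0 ≤ nuf T p π r t s a := by
  rw [nuf_succ_coh p π r hcoh]
  have := sq_sum_le (f := fun s' => vf T p π r (t + 1) s') (hp s a).1 (hp s a).2
  linarith

/-- Sum of target-policy deviations `Σ_a π(q - b)`. -/
noncomputable def cdev (T : ℕ) (p : S → A → S → ℝ) (π : ℕ → S → A → ℝ) (r : S → A → ℝ)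
    (b : ℕ → S → A → ℝ) (t : ℕ) (s : S) : ℝ :=
  ∑ a, π t s a * (qf T p π r t s a - b t s a)

/-- `Σ_a π √u`. -/
noncomputable def sqsum (T : ℕ) (p : S → A → S → ℝ) (π : ℕ → S → A → ℝ) (r : S → A → ℝ)
    (b : ℕ → S → A → ℝ) (n t : ℕ) (s : S) : ℝ :=
  ∑ a, π t s a * Real.sqrt (uAux T p π r b n t s a)

lemma vf_split (T : ℕ) (p : S → A → S → ℝ) (π : ℕ → S → A → ℝ) (r : S → A → ℝ)
    (b : ℕ → S → A → ℝ) (t : ℕ) (s : S) :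
    vf T p π r t s = cdev T p π r b t s + bbar π b t s := by
  unfold vf cdev bbar
  rw [← Finset.sum_add_distrib]
  exact Finset.sum_congr rfl fun a _ => by ring

/-- The window-restricted Λ condition. -/
def LamOn (T : ℕ) (p : S → A → S → ℝ) (π : ℕ → S → A → ℝ) (r : S → A → ℝ)
    (b : ℕ → S → A → ℝ) (μ : ℕ → S → A → ℝ) (n t : ℕ) : Prop :=
  ∀ k, k ≤ n → ∀ (s : S) (a : A), μ (t + k) s a = 0 →
    π (t + k) s a * uAux T p π r b (n - k) (t + k) s a = 0

lemma LamOn.succ {T : ℕ} {p : S → A → S → ℝ} {π : ℕ → S → A → ℝ} {r : S → A → ℝ}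
    {b μ : ℕ → S → A → ℝ} {n t : ℕ} (h : LamOn T p π r b μ (n + 1) t) :
    LamOn T p π r b μ n (t + 1) := by
  intro k hk s a hμ
  have := h (k + 1) (by omega) s a (by rwa [show t + (k + 1) = t + 1 + k by omega])
  rwa [show t + (k + 1) = t + 1 + k by omega, show n + 1 - (k + 1) = n - k by omega] at this

lemma LamOn.head {T : ℕ} {p : S → A → S → ℝ} {π : ℕ → S → A → ℝ} {r : S → A → ℝ}
    {b μ : ℕ → S → A → ℝ} {n t : ℕ} (h : LamOn T p π r b μ n t) (s : S) (a : A)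
    (hμ : μ t s a = 0) : π t s a * uAux T p π r b n t s a = 0 := by
  have := h 0 (Nat.zero_le _) s a (by rwa [Nat.add_zero])
  rwa [Nat.add_zero, Nat.sub_zero] at this

/-- The internal policy of `uAux` agrees with `mustar` on the visited window. -/
lemma uAux_succ_coh [Nonempty A] {T n t : ℕ} (p : S → A → S → ℝ) (π : ℕ → S → A → ℝ)
    (r : S → A → ℝ) (b : ℕ → S → A → ℝ) (hcoh : (n + 1) + t + 1 = T) (s : S) (a : A) :
    uAux T p π r b (n + 1) t s a =
      (qf T p π r t s a - b t s a) ^ 2 + nuf T p π r t s a +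
        ∑ s', p s a s' *
          (Exp p (mustar T p π r b) n (t + 1) s'
              (fun τ => Gest π (mustar T p π r b) r b n (t + 1) s' τ ^ 2)
            - (Exp p (mustar T p π r b) n (t + 1) s'
                (Gest π (mustar T p π r b) r b n (t + 1) s')) ^ 2) := by
  rw [uAux_succ']
  congr 1
  refine Finset.sum_congr rfl fun s' _ => ?_
  congr 1
  have hagree : ∀ k (s₁ : S) (a₁ : A),
      (fun t' s₁ a₁ => normPol (fun a₂ =>
        π t' s₁ a₂ * Real.sqrt (uAux T p π r b (n - (t' - (t + 1))) t' s₁ a₂)) a₁)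
        (t + 1 + k) s₁ a₁
      = mustar T p π r b (t + 1 + k) s₁ a₁ := by
    intro k s₁ a₁
    show normPol (fun a₂ =>
        π (t + 1 + k) s₁ a₂ * Real.sqrt (uAux T p π r b (n - (t + 1 + k - (t + 1))) (t + 1 + k) s₁ a₂)) a₁
      = normPol (fun a₂ =>
        π (t + 1 + k) s₁ a₂ * Real.sqrt (uf T p π r b (t + 1 + k) s₁ a₂)) a₁
    unfold uf
    rw [show n - (t + 1 + k - (t + 1)) = T - 1 - (t + 1 + k) by omega]
  unfold Var
  rw [Exp_congr n (t + 1) hagree s' _ _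
    (fun τ => Gest_congr n (t + 1) hagree s' τ)]
  rw [Exp_congr n (t + 1) hagree s' _ _
    (fun τ => by rw [Gest_congr n (t + 1) hagree s' τ])]

end CohAux
section OneStep
set_option linter.unusedSectionVars false

variable {S A : Type} [Fintype S] [Fintype A]

lemma sum_affine1 {ι : Type} [Fintype ι] {w : ι → ℝ} (h1 : ∑ i, w i = 1)
    (F : ι → ℝ) (c₀ c₁ : ℝ) :
    ∑ i, w i * (c₀ + c₁ * F i) = c₀ + c₁ * ∑ i, w i * F i := by
  have e : ∀ i, w i * (c₀ + c₁ * F i) = w i * c₀ + c₁ * (w i * F i) := fun i => by ring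
  rw [Finset.sum_congr rfl fun i _ => e i, Finset.sum_add_distrib,
    ← Finset.sum_mul, h1, one_mul, ← Finset.mul_sum]

lemma onestep {p : S → A → S → ℝ} (π : ℕ → S → A → ℝ) {μ : ℕ → S → A → ℝ} (r : S → A → ℝ)
    (b : ℕ → S → A → ℝ) (hp : IsKernel p) (n t : ℕ) (hPol : PolOn μ n (t + 1)) (s : S) :
    (Exp p μ (n + 1) t s (Gest π μ r b (n + 1) t s)
      = ∑ a, μ t s a * ((π t s a / μ t s a) *
          ((r s a - b t s a) + ∑ s', p s a s' * Exp p μ n (t + 1) s' (Gest π μ r b n (t + 1) s'))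
          + bbar π b t s)) ∧
    (Exp p μ (n + 1) t s (fun τ => Gest π μ r b (n + 1) t s τ ^ 2)
      = ∑ a, μ t s a * ((π t s a / μ t s a) ^ 2 *
          ((r s a - b t s a) ^ 2
            + 2 * (r s a - b t s a) * (∑ s', p s a s' * Exp p μ n (t + 1) s' (Gest π μ r b n (t + 1) s'))
            + ∑ s', p s a s' * Exp p μ n (t + 1) s' (fun τ => Gest π μ r b n (t + 1) s' τ ^ 2))
          + 2 * (π t s a / μ t s a) *
            ((r s a - b t s a) + ∑ s', p s a s' * Exp p μ n (t + 1) s' (Gest π μ r b n (t + 1) s'))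
            * bbar π b t s
          + bbar π b t s ^ 2)) := by
  constructor
  · rw [Exp_succ]
    refine Finset.sum_congr rfl fun a _ => ?_
    congr 1
    have e1 : ∀ s', Exp p μ n (t + 1) s' (fun τ => Gest π μ r b (n + 1) t s (a, s', τ))
        = ((π t s a / μ t s a) * (r s a - b t s a) + bbar π b t s)
          + (π t s a / μ t s a) * Exp p μ n (t + 1) s' (Gest π μ r b n (t + 1) s') := by
      intro s'
      have key := Exp_affine2 (μ := μ) hp n (t + 1) hPol s'
        (Gest π μ r b n (t + 1) s') (Gest π μ r b n (t + 1) s')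
        ((π t s a / μ t s a) * (r s a - b t s a) + bbar π b t s) (π t s a / μ t s a) 0
      rw [Exp_congr n (t + 1) (fun _ _ _ => rfl) s' _ _
        (fun τ => by rw [Gest_succ]; ring :
          ∀ τ, Gest π μ r b (n + 1) t s (a, s', τ)
            = ((π t s a / μ t s a) * (r s a - b t s a) + bbar π b t s)
              + (π t s a / μ t s a) * Gest π μ r b n (t + 1) s' τ
              + 0 * Gest π μ r b n (t + 1) s' τ), key]
      ring
    rw [Finset.sum_congr rfl fun s' _ => by rw [e1 s']]
    rw [sum_affine1 (hp s a).2 (fun s' => Exp p μ n (t + 1) s' (Gest π μ r b n (t + 1) s'))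
      ((π t s a / μ t s a) * (r s a - b t s a) + bbar π b t s) (π t s a / μ t s a)]
    ring
  · rw [Exp_succ]
    refine Finset.sum_congr rfl fun a _ => ?_
    congr 1
    have e1 : ∀ s', Exp p μ n (t + 1) s' (fun τ => Gest π μ r b (n + 1) t s (a, s', τ) ^ 2)
        = ((π t s a / μ t s a) * (r s a - b t s a) + bbar π b t s) ^ 2
          + (2 * (π t s a / μ t s a) * ((π t s a / μ t s a) * (r s a - b t s a) + bbar π b t s))
              * Exp p μ n (t + 1) s' (Gest π μ r b n (t + 1) s')
          + (π t s a / μ t s a) ^ 2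
              * Exp p μ n (t + 1) s' (fun τ => Gest π μ r b n (t + 1) s' τ ^ 2) := by
      intro s'
      have key := Exp_affine2 (μ := μ) hp n (t + 1) hPol s'
        (Gest π μ r b n (t + 1) s') (fun τ => Gest π μ r b n (t + 1) s' τ ^ 2)
        (((π t s a / μ t s a) * (r s a - b t s a) + bbar π b t s) ^ 2)
        (2 * (π t s a / μ t s a) * ((π t s a / μ t s a) * (r s a - b t s a) + bbar π b t s))
        ((π t s a / μ t s a) ^ 2)
      rw [Exp_congr n (t + 1) (fun _ _ _ => rfl) s' _ _
        (fun τ => by rw [Gest_succ]; ring :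
          ∀ τ, Gest π μ r b (n + 1) t s (a, s', τ) ^ 2
            = ((π t s a / μ t s a) * (r s a - b t s a) + bbar π b t s) ^ 2
              + (2 * (π t s a / μ t s a) * ((π t s a / μ t s a) * (r s a - b t s a) + bbar π b t s))
                  * Gest π μ r b n (t + 1) s' τ
              + (π t s a / μ t s a) ^ 2 * (fun τ => Gest π μ r b n (t + 1) s' τ ^ 2) τ), key]
    rw [Finset.sum_congr rfl fun s' _ => by rw [e1 s']]
    rw [sum_affine2 (hp s a).2 (fun s' => Exp p μ n (t + 1) s' (Gest π μ r b n (t + 1) s'))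
      (fun s' => Exp p μ n (t + 1) s' (fun τ => Gest π μ r b n (t + 1) s' τ ^ 2))
      (((π t s a / μ t s a) * (r s a - b t s a) + bbar π b t s) ^ 2)
      (2 * (π t s a / μ t s a) * ((π t s a / μ t s a) * (r s a - b t s a) + bbar π b t s))
      ((π t s a / μ t s a) ^ 2)]
    ring

end OneStep
section FinalAlg
set_option linter.unusedSectionVars false

variable {A : Type} [Fintype A]

/-- Splitting the canonical quadratic sum. -/
lemma sum_quad_split {μw πw E1 E2 : A → ℝ} {B : ℝ} (hμ1 : ∑ a, μw a = 1) :
    ∑ a, μw a * ((πw a / μw a) ^ 2 * E2 a + 2 * (πw a / μw a) * E1 a * B + B ^ 2)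
      = (∑ a, μw a * ((πw a / μw a) ^ 2 * E2 a))
        + 2 * B * (∑ a, μw a * ((πw a / μw a) * E1 a)) + B ^ 2 := by
  have e : ∀ a, μw a * ((πw a / μw a) ^ 2 * E2 a + 2 * (πw a / μw a) * E1 a * B + B ^ 2)
      = μw a * ((πw a / μw a) ^ 2 * E2 a)
        + 2 * B * (μw a * ((πw a / μw a) * E1 a)) + μw a * B ^ 2 := fun a => by ring
  rw [Finset.sum_congr rfl fun a _ => e a, Finset.sum_add_distrib, Finset.sum_add_distrib,
    ← Finset.mul_sum, ← Finset.sum_mul, hμ1, one_mul]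

lemma sum_lin_split {μw πw E1 : A → ℝ} {B : ℝ} (hμ1 : ∑ a, μw a = 1) :
    ∑ a, μw a * ((πw a / μw a) * E1 a + B)
      = (∑ a, μw a * ((πw a / μw a) * E1 a)) + B := by
  have e : ∀ a, μw a * ((πw a / μw a) * E1 a + B)
      = μw a * ((πw a / μw a) * E1 a) + μw a * B := fun a => by ring
  rw [Finset.sum_congr rfl fun a _ => e a, Finset.sum_add_distrib, ← Finset.sum_mul, hμ1,
    one_mul]

/-- The variance lower bound, one-step algebra, for an arbitrary behavior policy. -/
lemma final_alg {μw πw uw E1 E2 : A → ℝ} {B : ℝ}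
    (hμ0 : ∀ a, 0 ≤ μw a) (hμ1 : ∑ a, μw a = 1) (hπ0 : ∀ a, 0 ≤ πw a)
    (hu0 : ∀ a, 0 ≤ uw a) (hE2 : ∀ a, uw a ≤ E2 a)
    (hΛq : ∀ a, μw a = 0 → πw a * E1 a = 0)
    (hΛu : ∀ a, μw a = 0 → πw a * Real.sqrt (uw a) = 0) :
    (∑ a, μw a * ((πw a / μw a) * E1 a + B) = (∑ a, πw a * E1 a) + B) ∧
    ((∑ a, πw a * Real.sqrt (uw a)) ^ 2 + 2 * B * (∑ a, πw a * E1 a) + B ^ 2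
      ≤ ∑ a, μw a * ((πw a / μw a) ^ 2 * E2 a + 2 * (πw a / μw a) * E1 a * B + B ^ 2)) := by
  constructor
  · rw [sum_lin_split hμ1, sum_rho hΛq]
  · rw [sum_quad_split hμ1, sum_rho hΛq]
    have key : (∑ a, πw a * Real.sqrt (uw a)) ^ 2
        ≤ ∑ a, μw a * ((πw a / μw a) ^ 2 * E2 a) := by
      have step1 : (∑ a, πw a * Real.sqrt (uw a)) ^ 2
          ≤ ∑ a, (πw a * Real.sqrt (uw a)) ^ 2 / μw a :=
        sq_sum_le_div hμ0 (le_of_eq hμ1) hΛu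
      refine le_trans step1 (Finset.sum_le_sum fun a _ => ?_)
      by_cases hμ : μw a = 0
      · rw [hμ, hΛu a hμ]
        simp
      · have hμpos : 0 < μw a := lt_of_le_of_ne (hμ0 a) (Ne.symm hμ)
        have eR : μw a * ((πw a / μw a) ^ 2 * E2 a) = πw a ^ 2 * E2 a / μw a := by
          field_simp
        rw [mul_pow, Real.sq_sqrt (hu0 a), eR]
        have hnum : πw a ^ 2 * uw a ≤ πw a ^ 2 * E2 a :=
          mul_le_mul_of_nonneg_left (hE2 a) (sq_nonneg _)
        gcongr
    linarith

/-- The one-step algebra under the optimal behavior policy: exact equalities. -/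
lemma final_alg_star [Nonempty A] {πw uw E1 E2 : A → ℝ} {B : ℝ}
    (hπ0 : ∀ a, 0 ≤ πw a) (hu0 : ∀ a, 0 ≤ uw a) (hE2 : ∀ a, E2 a = uw a)
    (hΛq : ∀ a, πw a * Real.sqrt (uw a) = 0 → πw a * E1 a = 0) :
    (∑ a, normPol (fun a' => πw a' * Real.sqrt (uw a')) a *
        ((πw a / normPol (fun a' => πw a' * Real.sqrt (uw a')) a) * E1 a + B)
      = (∑ a, πw a * E1 a) + B) ∧
    (∑ a, normPol (fun a' => πw a' * Real.sqrt (uw a')) a *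
        ((πw a / normPol (fun a' => πw a' * Real.sqrt (uw a')) a) ^ 2 * E2 a
          + 2 * (πw a / normPol (fun a' => πw a' * Real.sqrt (uw a')) a) * E1 a * B + B ^ 2)
      = (∑ a, πw a * Real.sqrt (uw a)) ^ 2 + 2 * B * (∑ a, πw a * E1 a) + B ^ 2) := by
  have hμ1 : ∑ a, normPol (fun a' => πw a' * Real.sqrt (uw a')) a = 1 := normPol_sum _
  have hΛ : ∀ a, normPol (fun a' => πw a' * Real.sqrt (uw a')) a = 0 → πw a * E1 a = 0 :=
    fun a h => hΛq a (normPol_eq_zero a h)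
  constructor
  · rw [sum_lin_split hμ1, sum_rho hΛ]
  · rw [sum_quad_split hμ1, sum_rho hΛ]
    have e2 : ∑ a, normPol (fun a' => πw a' * Real.sqrt (uw a')) a *
        ((πw a / normPol (fun a' => πw a' * Real.sqrt (uw a')) a) ^ 2 * E2 a)
        = (∑ a, πw a * Real.sqrt (uw a)) ^ 2 := by
      rw [Finset.sum_congr rfl fun a _ => by rw [hE2 a]]
      exact sum_rho_sq_eq hπ0 hu0
    rw [e2]

end FinalAlg
section MainLemma
set_option linter.unusedSectionVars false

variable {S A : Type} [Fintype S] [Fintype A]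

lemma mustar_polOn [Nonempty A] {T : ℕ} {p : S → A → S → ℝ} {π : ℕ → S → A → ℝ}
    {r : S → A → ℝ} {b : ℕ → S → A → ℝ} (hπ : IsPolicy π) (n t : ℕ) :
    PolOn (mustar T p π r b) n t := by
  intro k _ s
  constructor
  · intro a
    exact normPol_nonneg
      (fun a' => mul_nonneg ((hπ (t + k) s).1 a') (Real.sqrt_nonneg _)) a
  · exact normPol_sum _

lemma main [Nonempty A] (T : ℕ) (p : S → A → S → ℝ) (hp : IsKernel p)
    (π : ℕ → S → A → ℝ) (hπ : IsPolicy π) (r : S → A → ℝ) (b : ℕ → S → A → ℝ) :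
    ∀ n t, n + t + 1 = T →
      (∀ s a, 0 ≤ uAux T p π r b n t s a) ∧
      (∀ μ, IsPolicy μ → LamOn T p π r b μ n t → ∀ s,
        Exp p μ n t s (Gest π μ r b n t s) = vf T p π r t s ∧
        sqsum T p π r b n t s ^ 2 + vf T p π r t s ^ 2 - cdev T p π r b t s ^ 2
          ≤ Exp p μ n t s (fun τ => Gest π μ r b n t s τ ^ 2)) ∧
      (∀ s,
        Exp p (mustar T p π r b) n t s (Gest π (mustar T p π r b) r b n t s)
          = vf T p π r t s ∧
        Exp p (mustar T p π r b) n t s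
            (fun τ => Gest π (mustar T p π r b) r b n t s τ ^ 2)
          = sqsum T p π r b n t s ^ 2 + vf T p π r t s ^ 2 - cdev T p π r b t s ^ 2) := by
  intro n
  induction n with
  | zero =>
    intro t hcoh
    have hq : ∀ (s : S) (a : A), qf T p π r t s a = r s a :=
      fun s a => qf_zero_coh p π r hcoh s a
    have hu0 : ∀ (s : S) (a : A), 0 ≤ uAux T p π r b 0 t s a := by
      intro s a; rw [uAux_zero]; exact sq_nonneg _
    refine ⟨hu0, ?_, ?_⟩
    · -- P2 at n = 0
      intro μ hμpol hΛ s
      have hΛ0 : ∀ a, μ t s a = 0 →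
          π t s a * (r s a - b t s a) = 0 ∧
          π t s a * Real.sqrt (uAux T p π r b 0 t s a) = 0 := by
        intro a hμa
        have h := hΛ.head s a hμa
        rw [uAux_zero, hq s a] at h
        rcases mul_eq_zero.1 h with h' | h'
        · exact ⟨by rw [h', zero_mul], by rw [h', zero_mul]⟩
        · have h2 : r s a - b t s a = 0 := by
            have := sq_nonneg (r s a - b t s a)
            nlinarith [h']
          refine ⟨by rw [h2, mul_zero], ?_⟩
          rw [uAux_zero, hq s a, h2]
          simp
      have hcd : ∑ a, π t s a * (r s a - b t s a) = cdev T p π r b t s := by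
        unfold cdev
        exact Finset.sum_congr rfl fun a _ => by rw [hq s a]
      have hE2 : ∀ a, uAux T p π r b 0 t s a ≤ (r s a - b t s a) ^ 2 := by
        intro a; rw [uAux_zero, hq s a]
      have key := final_alg (μw := fun a => μ t s a) (πw := fun a => π t s a)
        (uw := fun a => uAux T p π r b 0 t s a)
        (E1 := fun a => r s a - b t s a) (E2 := fun a => (r s a - b t s a) ^ 2)
        (B := bbar π b t s)
        (hμpol t s).1 (hμpol t s).2 (hπ t s).1 (hu0 s)
        hE2 (fun a h => (hΛ0 a h).1) (fun a h => (hΛ0 a h).2)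
      have hu_sqrt : ∀ a, Real.sqrt (uAux T p π r b 0 t s a) = Real.sqrt ((r s a - b t s a)^2) := by
        intro a; rw [uAux_zero, hq s a]
      have hv := vf_split T p π r b t s
      have hexp1 : Exp p μ 0 t s (Gest π μ r b 0 t s)
          = ∑ a, μ t s a * ((π t s a / μ t s a) * (r s a - b t s a) + bbar π b t s) := by
        rw [Exp_zero]
        exact Finset.sum_congr rfl fun a _ => by rw [Gest_zero]
      have hexp2 : Exp p μ 0 t s (fun τ => Gest π μ r b 0 t s τ ^ 2)
          = ∑ a, μ t s a * ((π t s a / μ t s a) ^ 2 * (r s a - b t s a) ^ 2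
              + 2 * (π t s a / μ t s a) * (r s a - b t s a) * bbar π b t s
              + bbar π b t s ^ 2) := by
        rw [Exp_zero]
        refine Finset.sum_congr rfl fun a _ => ?_
        rw [Gest_zero]; ring
      constructor
      · rw [hexp1, key.1, hcd, ← hv]
      · rw [hexp2]
        have hsq : sqsum T p π r b 0 t s = ∑ a, π t s a * Real.sqrt (uAux T p π r b 0 t s a) :=
          rfl
        calc sqsum T p π r b 0 t s ^ 2 + vf T p π r t s ^ 2 - cdev T p π r b t s ^ 2
            = (∑ a, π t s a * Real.sqrt (uAux T p π r b 0 t s a)) ^ 2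
                + 2 * bbar π b t s * (∑ a, π t s a * (r s a - b t s a)) + bbar π b t s ^ 2 := by
              rw [hsq, hcd, hv]; ring
          _ ≤ _ := key.2
    · -- P3 at n = 0
      intro s
      have hM : ∀ a, mustar T p π r b t s a
          = normPol (fun a' => π t s a' * Real.sqrt (uAux T p π r b 0 t s a')) a := by
        intro a
        simp only [mustar, uf]
        rw [show T - 1 - t = 0 by omega]
      have hΛq : ∀ a, π t s a * Real.sqrt (uAux T p π r b 0 t s a) = 0 →
          π t s a * (r s a - b t s a) = 0 := by
        intro a h
        rcases mul_eq_zero.1 h with h' | h'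
        · rw [h', zero_mul]
        · have h2 : uAux T p π r b 0 t s a = 0 := by
            have h3 := Real.sqrt_eq_zero'.1 h'
            exact le_antisymm h3 (hu0 s a)
          rw [uAux_zero, hq s a] at h2
          have h3 : r s a - b t s a = 0 := by nlinarith [h2]
          rw [h3, mul_zero]
      have hcd : ∑ a, π t s a * (r s a - b t s a) = cdev T p π r b t s := by
        unfold cdev
        exact Finset.sum_congr rfl fun a _ => by rw [hq s a]
      have hE2 : ∀ a, (r s a - b t s a) ^ 2 = uAux T p π r b 0 t s a := by
        intro a; rw [uAux_zero, hq s a]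
      have key := final_alg_star (πw := fun a => π t s a)
        (uw := fun a => uAux T p π r b 0 t s a)
        (E1 := fun a => r s a - b t s a) (E2 := fun a => (r s a - b t s a) ^ 2)
        (B := bbar π b t s) (hπ t s).1 (hu0 s) hE2 hΛq
      have hv := vf_split T p π r b t s
      have hexp1 : Exp p (mustar T p π r b) 0 t s (Gest π (mustar T p π r b) r b 0 t s)
          = ∑ a, normPol (fun a' => π t s a' * Real.sqrt (uAux T p π r b 0 t s a')) a *
              ((π t s a / normPol (fun a' => π t s a' * Real.sqrt (uAux T p π r b 0 t s a')) a)
                * (r s a - b t s a) + bbar π b t s) := by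
        rw [Exp_zero]
        refine Finset.sum_congr rfl fun a _ => ?_
        rw [Gest_zero, hM a]
      have hexp2 : Exp p (mustar T p π r b) 0 t s
            (fun τ => Gest π (mustar T p π r b) r b 0 t s τ ^ 2)
          = ∑ a, normPol (fun a' => π t s a' * Real.sqrt (uAux T p π r b 0 t s a')) a *
              ((π t s a / normPol (fun a' => π t s a' * Real.sqrt (uAux T p π r b 0 t s a')) a) ^ 2
                  * (r s a - b t s a) ^ 2
                + 2 * (π t s a / normPol (fun a' => π t s a' * Real.sqrt (uAux T p π r b 0 t s a')) a)
                  * (r s a - b t s a) * bbar π b t s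
                + bbar π b t s ^ 2) := by
        rw [Exp_zero]
        refine Finset.sum_congr rfl fun a _ => ?_
        rw [Gest_zero, hM a]; ring
      constructor
      · rw [hexp1, key.1, hcd, ← hv]
      · rw [hexp2, key.2, hcd]
        have hsq : sqsum T p π r b 0 t s = ∑ a, π t s a * Real.sqrt (uAux T p π r b 0 t s a) :=
          rfl
        rw [hsq, hv]; ring
  | succ n ih =>
    intro t hcoh
    have hcoh' : n + (t + 1) + 1 = T := by omega
    obtain ⟨ihu, ihP2, ihP3⟩ := ih (t + 1) hcoh'
    have hq : ∀ (s : S) (a : A), qf T p π r t s a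
        = r s a + ∑ s', p s a s' * vf T p π r (t + 1) s' :=
      fun s a => qf_succ_coh p π r hcoh s a
    have hstar1 : ∀ s', Exp p (mustar T p π r b) n (t + 1) s'
        (Gest π (mustar T p π r b) r b n (t + 1) s') = vf T p π r (t + 1) s' :=
      fun s' => (ihP3 s').1
    have hstar2 : ∀ s', Exp p (mustar T p π r b) n (t + 1) s'
        (fun τ => Gest π (mustar T p π r b) r b n (t + 1) s' τ ^ 2)
        = sqsum T p π r b n (t + 1) s' ^ 2 + vf T p π r (t + 1) s' ^ 2
            - cdev T p π r b (t + 1) s' ^ 2 :=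
      fun s' => (ihP3 s').2
    -- the exact expression for u at level n+1
    have hu_eq : ∀ (s : S) (a : A), uAux T p π r b (n + 1) t s a
        = (r s a - b t s a) ^ 2
          + 2 * (r s a - b t s a) * (∑ s', p s a s' * vf T p π r (t + 1) s')
          + ∑ s', p s a s' * (sqsum T p π r b n (t + 1) s' ^ 2
              + vf T p π r (t + 1) s' ^ 2 - cdev T p π r b (t + 1) s' ^ 2) := by
      intro s a
      rw [uAux_succ_coh p π r b hcoh s a, nuf_succ_coh p π r hcoh s a, hq s a]
      rw [(Finset.sum_congr rfl fun s' _ => by rw [hstar1 s', hstar2 s'] :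
        (∑ s', p s a s' * (Exp p (mustar T p π r b) n (t + 1) s'
            (fun τ => Gest π (mustar T p π r b) r b n (t + 1) s' τ ^ 2)
          - (Exp p (mustar T p π r b) n (t + 1) s'
              (Gest π (mustar T p π r b) r b n (t + 1) s')) ^ 2))
        = ∑ s', p s a s' * ((sqsum T p π r b n (t + 1) s' ^ 2 + vf T p π r (t + 1) s' ^ 2
            - cdev T p π r b (t + 1) s' ^ 2) - vf T p π r (t + 1) s' ^ 2))]
      have split1 : ∀ X Y : S → ℝ, (∑ s', p s a s' * (X s' - Y s'))
          = (∑ s', p s a s' * X s') - ∑ s', p s a s' * Y s' := by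
        intro X Y
        rw [← Finset.sum_sub_distrib]
        exact Finset.sum_congr rfl fun s' _ => by ring
      rw [split1]
      ring
    have hVar0 : ∀ s' : S, 0 ≤ Exp p (mustar T p π r b) n (t + 1) s'
          (fun τ => Gest π (mustar T p π r b) r b n (t + 1) s' τ ^ 2)
        - (Exp p (mustar T p π r b) n (t + 1) s'
            (Gest π (mustar T p π r b) r b n (t + 1) s')) ^ 2 := by
      intro s'
      have := Exp_sq hp n (t + 1) (mustar_polOn (T := T) (p := p) (r := r) (b := b) hπ n (t + 1)) s'
        (Gest π (mustar T p π r b) r b n (t + 1) s')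
      linarith
    have hu0 : ∀ (s : S) (a : A), 0 ≤ uAux T p π r b (n + 1) t s a := by
      intro s a
      rw [uAux_succ_coh p π r b hcoh s a]
      have h1 := sq_nonneg (qf T p π r t s a - b t s a)
      have h2 := nuf_nonneg_coh π r hp hcoh s a
      have h3 : 0 ≤ ∑ s', p s a s' * (Exp p (mustar T p π r b) n (t + 1) s'
            (fun τ => Gest π (mustar T p π r b) r b n (t + 1) s' τ ^ 2)
          - (Exp p (mustar T p π r b) n (t + 1) s'
              (Gest π (mustar T p π r b) r b n (t + 1) s')) ^ 2) :=
        Finset.sum_nonneg fun s' _ => mul_nonneg ((hp s a).1 s') (hVar0 s')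
      linarith
    have hqb_le : ∀ (s : S) (a : A),
        (qf T p π r t s a - b t s a) ^ 2 ≤ uAux T p π r b (n + 1) t s a := by
      intro s a
      rw [uAux_succ_coh p π r b hcoh s a]
      have h2 := nuf_nonneg_coh π r hp hcoh s a
      have h3 : 0 ≤ ∑ s', p s a s' * (Exp p (mustar T p π r b) n (t + 1) s'
            (fun τ => Gest π (mustar T p π r b) r b n (t + 1) s' τ ^ 2)
          - (Exp p (mustar T p π r b) n (t + 1) s'
              (Gest π (mustar T p π r b) r b n (t + 1) s')) ^ 2) :=
        Finset.sum_nonneg fun s' _ => mul_nonneg ((hp s a).1 s') (hVar0 s')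
      linarith
    have hker : ∀ (s : S) (a : A), π t s a * uAux T p π r b (n + 1) t s a = 0 →
        π t s a * (qf T p π r t s a - b t s a) = 0 ∧
        π t s a * Real.sqrt (uAux T p π r b (n + 1) t s a) = 0 := by
      intro s a h
      rcases mul_eq_zero.1 h with h' | h'
      · exact ⟨by rw [h', zero_mul], by rw [h', zero_mul]⟩
      · have hq0 : qf T p π r t s a - b t s a = 0 := by
          nlinarith [hqb_le s a, sq_nonneg (qf T p π r t s a - b t s a)]
        exact ⟨by rw [hq0, mul_zero], by rw [h', Real.sqrt_zero, mul_zero]⟩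
    refine ⟨hu0, ?_, ?_⟩
    · -- P2 at n + 1
      intro μ hμpol hΛ s
      have hEG : ∀ s', Exp p μ n (t + 1) s' (Gest π μ r b n (t + 1) s')
          = vf T p π r (t + 1) s' := fun s' => (ihP2 μ hμpol hΛ.succ s').1
      have hEG2 : ∀ s', sqsum T p π r b n (t + 1) s' ^ 2 + vf T p π r (t + 1) s' ^ 2
          - cdev T p π r b (t + 1) s' ^ 2
          ≤ Exp p μ n (t + 1) s' (fun τ => Gest π μ r b n (t + 1) s' τ ^ 2) :=
        fun s' => (ihP2 μ hμpol hΛ.succ s').2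
      obtain ⟨e1, e2⟩ := onestep π r b hp n t (polOn_of_isPolicy hμpol n (t + 1)) s
      simp only [hEG] at e1 e2
      have hE1q : ∀ a, (r s a - b t s a) + ∑ s', p s a s' * vf T p π r (t + 1) s'
          = qf T p π r t s a - b t s a := by
        intro a; rw [hq s a]; ring
      have hE2 : ∀ a, uAux T p π r b (n + 1) t s a
          ≤ (r s a - b t s a) ^ 2
            + 2 * (r s a - b t s a) * (∑ s', p s a s' * vf T p π r (t + 1) s')
            + ∑ s', p s a s' * Exp p μ n (t + 1) s' (fun τ => Gest π μ r b n (t + 1) s' τ ^ 2) := by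
        intro a
        rw [hu_eq s a]
        have : (∑ s', p s a s' * (sqsum T p π r b n (t + 1) s' ^ 2
              + vf T p π r (t + 1) s' ^ 2 - cdev T p π r b (t + 1) s' ^ 2))
            ≤ ∑ s', p s a s' * Exp p μ n (t + 1) s' (fun τ => Gest π μ r b n (t + 1) s' τ ^ 2) :=
          Finset.sum_le_sum fun s' _ => mul_le_mul_of_nonneg_left (hEG2 s') ((hp s a).1 s')
        linarith
      have key := final_alg (μw := fun a => μ t s a) (πw := fun a => π t s a)
        (uw := fun a => uAux T p π r b (n + 1) t s a)
        (E1 := fun a => (r s a - b t s a) + ∑ s', p s a s' * vf T p π r (t + 1) s')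
        (E2 := fun a => (r s a - b t s a) ^ 2
          + 2 * (r s a - b t s a) * (∑ s', p s a s' * vf T p π r (t + 1) s')
          + ∑ s', p s a s' * Exp p μ n (t + 1) s' (fun τ => Gest π μ r b n (t + 1) s' τ ^ 2))
        (B := bbar π b t s)
        (hμpol t s).1 (hμpol t s).2 (hπ t s).1 (hu0 s) hE2
        (fun a h => by
          have h1 := (hker s a (hΛ.head s a h)).1
          rw [← hE1q a] at h1
          exact h1)
        (fun a h => (hker s a (hΛ.head s a h)).2)
      have hcd : ∑ a, π t s a * ((r s a - b t s a) + ∑ s', p s a s' * vf T p π r (t + 1) s')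
          = cdev T p π r b t s := by
        unfold cdev
        exact Finset.sum_congr rfl fun a _ => by rw [hE1q a]
      have hv := vf_split T p π r b t s
      constructor
      · rw [e1, key.1, hcd, ← hv]
      · rw [e2]
        rw [hcd] at key
        have hsq : sqsum T p π r b (n + 1) t s
            = ∑ a, π t s a * Real.sqrt (uAux T p π r b (n + 1) t s a) := rfl
        calc sqsum T p π r b (n + 1) t s ^ 2 + vf T p π r t s ^ 2 - cdev T p π r b t s ^ 2
            = (∑ a, π t s a * Real.sqrt (uAux T p π r b (n + 1) t s a)) ^ 2
                + 2 * bbar π b t s * cdev T p π r b t s + bbar π b t s ^ 2 := by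
              rw [hsq, hv]; ring
          _ ≤ _ := key.2
    · -- P3 at n + 1
      intro s
      obtain ⟨e1, e2⟩ := onestep π r b hp n t (mustar_polOn (T := T) (p := p) (r := r) (b := b) hπ n (t + 1)) s
      simp only [hstar1] at e1
      simp only [hstar1] at e2
      rw [(Finset.sum_congr rfl fun a _ => by
        rw [(Finset.sum_congr rfl fun s' _ => by rw [hstar2 s'] :
          (∑ s', p s a s' * Exp p (mustar T p π r b) n (t + 1) s'
              (fun τ => Gest π (mustar T p π r b) r b n (t + 1) s' τ ^ 2))
          = ∑ s', p s a s' * (sqsum T p π r b n (t + 1) s' ^ 2 + vf T p π r (t + 1) s' ^ 2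
              - cdev T p π r b (t + 1) s' ^ 2))])] at e2
      have hM : ∀ a, mustar T p π r b t s a
          = normPol (fun a' => π t s a' * Real.sqrt (uAux T p π r b (n + 1) t s a')) a := by
        intro a
        simp only [mustar, uf]
        rw [show T - 1 - t = n + 1 by omega]
      simp only [hM] at e1 e2
      have hE1q : ∀ a, (r s a - b t s a) + ∑ s', p s a s' * vf T p π r (t + 1) s'
          = qf T p π r t s a - b t s a := by
        intro a; rw [hq s a]; ring
      have hΛq : ∀ a, π t s a * Real.sqrt (uAux T p π r b (n + 1) t s a) = 0 →
          π t s a * ((r s a - b t s a) + ∑ s', p s a s' * vf T p π r (t + 1) s') = 0 := by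
        intro a h
        rw [hE1q a]
        rcases mul_eq_zero.1 h with h' | h'
        · rw [h', zero_mul]
        · have h2 : uAux T p π r b (n + 1) t s a = 0 := by
            have h3 := Real.sqrt_eq_zero'.1 h'
            exact le_antisymm h3 (hu0 s a)
          have hq0 : qf T p π r t s a - b t s a = 0 := by
            nlinarith [hqb_le s a, sq_nonneg (qf T p π r t s a - b t s a), h2]
          rw [hq0, mul_zero]
      have hE2 : ∀ a, (r s a - b t s a) ^ 2
          + 2 * (r s a - b t s a) * (∑ s', p s a s' * vf T p π r (t + 1) s')
          + ∑ s', p s a s' * (sqsum T p π r b n (t + 1) s' ^ 2 + vf T p π r (t + 1) s' ^ 2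
              - cdev T p π r b (t + 1) s' ^ 2)
          = uAux T p π r b (n + 1) t s a := fun a => (hu_eq s a).symm
      have key := final_alg_star (πw := fun a => π t s a)
        (uw := fun a => uAux T p π r b (n + 1) t s a)
        (E1 := fun a => (r s a - b t s a) + ∑ s', p s a s' * vf T p π r (t + 1) s')
        (E2 := fun a => (r s a - b t s a) ^ 2
          + 2 * (r s a - b t s a) * (∑ s', p s a s' * vf T p π r (t + 1) s')
          + ∑ s', p s a s' * (sqsum T p π r b n (t + 1) s' ^ 2 + vf T p π r (t + 1) s' ^ 2
              - cdev T p π r b (t + 1) s' ^ 2))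
        (B := bbar π b t s) (hπ t s).1 (hu0 s) hE2 hΛq
      have hcd : ∑ a, π t s a * ((r s a - b t s a) + ∑ s', p s a s' * vf T p π r (t + 1) s')
          = cdev T p π r b t s := by
        unfold cdev
        exact Finset.sum_congr rfl fun a _ => by rw [hE1q a]
      have hv := vf_split T p π r b t s
      constructor
      · rw [e1, key.1, hcd, ← hv]
      · rw [e2, key.2, hcd]
        have hsq : sqsum T p π r b (n + 1) t s
            = ∑ a, π t s a * Real.sqrt (uAux T p π r b (n + 1) t s a) := rfl
        rw [hsq, hv]; ring

end MainLemma
section CmpLemma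
set_option linter.unusedSectionVars false

variable {S A : Type} [Fintype S] [Fintype A]

lemma cdev_bstar (T : ℕ) (p : S → A → S → ℝ) (π : ℕ → S → A → ℝ) (r : S → A → ℝ)
    (t : ℕ) (s : S) : cdev T p π r (bstar T p π r) t s = 0 := by
  unfold cdev bstar
  simp

lemma cmp2of1 {π qb : A → ℝ} {ustar ub : A → ℝ}
    (hπ0 : ∀ a, 0 ≤ π a) (hu0 : ∀ a, 0 ≤ ustar a)
    (h1 : ∀ a, ustar a + qb a ^ 2 ≤ ub a) :
    (∑ a, π a * Real.sqrt (ustar a)) ^ 2 + (∑ a, π a * qb a) ^ 2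
      ≤ (∑ a, π a * Real.sqrt (ub a)) ^ 2 := by
  have hsum : (∑ a, π a * Real.sqrt (ustar a + qb a ^ 2))
      ≤ ∑ a, π a * Real.sqrt (ub a) :=
    Finset.sum_le_sum fun a _ =>
      mul_le_mul_of_nonneg_left (Real.sqrt_le_sqrt (h1 a)) (hπ0 a)
  have hmink : (∑ a, π a * Real.sqrt (ustar a)) ^ 2
        + (∑ a, π a * Real.sqrt (qb a ^ 2)) ^ 2
      ≤ (∑ a, π a * Real.sqrt (ustar a + qb a ^ 2)) ^ 2 :=
    minkowski_sq hπ0 hu0 (fun a => sq_nonneg _)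
  have habs : (∑ a, π a * qb a) ^ 2 ≤ (∑ a, π a * Real.sqrt (qb a ^ 2)) ^ 2 := by
    have e : ∀ a, Real.sqrt (qb a ^ 2) = |qb a| := fun a => Real.sqrt_sq_eq_abs _
    have hE : (∑ a, π a * Real.sqrt (qb a ^ 2)) = ∑ a, π a * |qb a| :=
      Finset.sum_congr rfl fun a _ => by rw [e a]
    rw [hE]
    have h2 : |∑ a, π a * qb a| ≤ ∑ a, π a * |qb a| := by
      refine le_trans (Finset.abs_sum_le_sum_abs _ _) ?_
      refine Finset.sum_le_sum fun a _ => ?_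
      rw [abs_mul, abs_of_nonneg (hπ0 a)]
    calc (∑ a, π a * qb a) ^ 2 = |∑ a, π a * qb a| ^ 2 := (sq_abs _).symm
      _ ≤ (∑ a, π a * |qb a|) ^ 2 := pow_le_pow_left₀ (abs_nonneg _) h2 2
  have hfin : (∑ a, π a * Real.sqrt (ustar a + qb a ^ 2)) ^ 2
      ≤ (∑ a, π a * Real.sqrt (ub a)) ^ 2 :=
    pow_le_pow_left₀
      (Finset.sum_nonneg fun a _ => mul_nonneg (hπ0 a) (Real.sqrt_nonneg _)) hsum 2
  linarith

lemma cmp [Nonempty A] (T : ℕ) (p : S → A → S → ℝ) (hp : IsKernel p)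
    (π : ℕ → S → A → ℝ) (hπ : IsPolicy π) (r : S → A → ℝ) (b : ℕ → S → A → ℝ) :
    ∀ n t, n + t + 1 = T → ∀ s : S,
      (∀ a, uAux T p π r (bstar T p π r) n t s a + (qf T p π r t s a - b t s a) ^ 2
        ≤ uAux T p π r b n t s a) ∧
      (sqsum T p π r (bstar T p π r) n t s ^ 2 + cdev T p π r b t s ^ 2
        ≤ sqsum T p π r b n t s ^ 2) := by
  intro n
  induction n with
  | zero =>
    intro t hcoh s
    have h1 : ∀ a, uAux T p π r (bstar T p π r) 0 t s a + (qf T p π r t s a - b t s a) ^ 2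
        ≤ uAux T p π r b 0 t s a := by
      intro a
      rw [uAux_zero, uAux_zero]
      unfold bstar
      simp
    refine ⟨h1, ?_⟩
    have hu0 : ∀ a, 0 ≤ uAux T p π r (bstar T p π r) 0 t s a := by
      intro a; rw [uAux_zero]; exact sq_nonneg _
    exact cmp2of1 (hπ t s).1 hu0 h1
  | succ n ih =>
    intro t hcoh s
    have hcoh' : n + (t + 1) + 1 = T := by omega
    obtain ⟨_, _, P3b⟩ := main T p hp π hπ r b n (t + 1) hcoh'
    obtain ⟨_, _, P3bs⟩ := main T p hp π hπ r (bstar T p π r) n (t + 1) hcoh'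
    obtain ⟨hu0bs, _, _⟩ := main T p hp π hπ r (bstar T p π r) (n + 1) t hcoh
    have hq : ∀ (s : S) (a : A), qf T p π r t s a
        = r s a + ∑ s', p s a s' * vf T p π r (t + 1) s' :=
      fun s a => qf_succ_coh p π r hcoh s a
    have hu_eq : ∀ (c : ℕ → S → A → ℝ),
        (∀ s', Exp p (mustar T p π r c) n (t + 1) s'
          (Gest π (mustar T p π r c) r c n (t + 1) s') = vf T p π r (t + 1) s') →
        (∀ s', Exp p (mustar T p π r c) n (t + 1) s'
            (fun τ => Gest π (mustar T p π r c) r c n (t + 1) s' τ ^ 2)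
          = sqsum T p π r c n (t + 1) s' ^ 2 + vf T p π r (t + 1) s' ^ 2
              - cdev T p π r c (t + 1) s' ^ 2) →
        ∀ (s : S) (a : A), uAux T p π r c (n + 1) t s a
          = (r s a - c t s a) ^ 2
            + 2 * (r s a - c t s a) * (∑ s', p s a s' * vf T p π r (t + 1) s')
            + ∑ s', p s a s' * (sqsum T p π r c n (t + 1) s' ^ 2
                + vf T p π r (t + 1) s' ^ 2 - cdev T p π r c (t + 1) s' ^ 2) := by
      intro c hstar1 hstar2 s a
      rw [uAux_succ_coh p π r c hcoh s a, nuf_succ_coh p π r hcoh s a, hq s a]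
      rw [(Finset.sum_congr rfl fun s' _ => by rw [hstar1 s', hstar2 s'] :
        (∑ s', p s a s' * (Exp p (mustar T p π r c) n (t + 1) s'
            (fun τ => Gest π (mustar T p π r c) r c n (t + 1) s' τ ^ 2)
          - (Exp p (mustar T p π r c) n (t + 1) s'
              (Gest π (mustar T p π r c) r c n (t + 1) s')) ^ 2))
        = ∑ s', p s a s' * ((sqsum T p π r c n (t + 1) s' ^ 2 + vf T p π r (t + 1) s' ^ 2
            - cdev T p π r c (t + 1) s' ^ 2) - vf T p π r (t + 1) s' ^ 2))]
      have split1 : ∀ X Y : S → ℝ, (∑ s', p s a s' * (X s' - Y s'))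
          = (∑ s', p s a s' * X s') - ∑ s', p s a s' * Y s' := by
        intro X Y
        rw [← Finset.sum_sub_distrib]
        exact Finset.sum_congr rfl fun s' _ => by ring
      rw [split1]
      ring
    have hu_b := hu_eq b (fun s' => (P3b s').1) (fun s' => (P3b s').2)
    have hu_bs := hu_eq (bstar T p π r) (fun s' => (P3bs s').1) (fun s' => (P3bs s').2)
    have h1 : ∀ a, uAux T p π r (bstar T p π r) (n + 1) t s a
        + (qf T p π r t s a - b t s a) ^ 2 ≤ uAux T p π r b (n + 1) t s a := by
      intro a
      have hWsum : (∑ s', p s a s' * (sqsum T p π r (bstar T p π r) n (t + 1) s' ^ 2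
              + vf T p π r (t + 1) s' ^ 2 - cdev T p π r (bstar T p π r) (t + 1) s' ^ 2))
          ≤ ∑ s', p s a s' * (sqsum T p π r b n (t + 1) s' ^ 2
              + vf T p π r (t + 1) s' ^ 2 - cdev T p π r b (t + 1) s' ^ 2) := by
        refine Finset.sum_le_sum fun s' _ => ?_
        refine mul_le_mul_of_nonneg_left ?_ ((hp s a).1 s')
        have hih := (ih (t + 1) hcoh' s').2
        have hc0 := cdev_bstar T p π r (t + 1) s'
        rw [hc0]
        linarith
      have hbs : bstar T p π r t s a
          = r s a + ∑ s', p s a s' * vf T p π r (t + 1) s' := hq s a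
      rw [hu_b s a, hu_bs s a, hq s a, hbs]
      nlinarith [hWsum]
    refine ⟨h1, ?_⟩
    exact cmp2of1 (hπ t s).1 (fun a => hu0bs s a) h1

end CmpLemma
/-- Doubly optimal: with `b*_t(s,a) = q_{π,t}(s,a)`, for every baseline `b`,
every behavior policy `μ ∈ Λ^b`, every time `t` and state `s`,
`Var(G^{b*}(τ^{μ^{*,b*}}_{t:T−1})|S_t=s) ≤ Var(G^b(τ^μ_{t:T−1})|S_t=s)`; i.e. the pair
`(μ^{*,b*}, b*)` solves the bi-level variance-minimization problem. -/
theorem doubly_optimal {S A : Type} [Fintype S] [Fintype A] [Nonempty A]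
    (T : ℕ) (hT : 1 ≤ T)
    (p : S → A → S → ℝ) (hp : IsKernel p)
    (r : S → A → ℝ)
    (π : ℕ → S → A → ℝ) (hπ : IsPolicy π)
    (b : ℕ → S → A → ℝ)
    (μ : ℕ → S → A → ℝ) (hμ : IsPolicy μ) (hΛ : inLambda T p π r b μ)
    (t : ℕ) (ht : t < T) (s : S) :
    VarG T p π (mustar T p π r (bstar T p π r)) r (bstar T p π r) t s ≤
      VarG T p π μ r b t s := by
  have hcoh : (T - 1 - t) + t + 1 = T := by omega
  obtain ⟨hu0b, P2b, _⟩ := main T p hp π hπ r b (T - 1 - t) t hcoh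
  obtain ⟨_, _, P3bs⟩ := main T p hp π hπ r (bstar T p π r) (T - 1 - t) t hcoh
  have hΛ' : LamOn T p π r b μ (T - 1 - t) t := by
    intro k hk s₁ a hμ0
    have h := hΛ (t + k) s₁ a (by omega) hμ0
    unfold uf at h
    rwa [show T - 1 - t - k = T - 1 - (t + k) by omega]
  obtain ⟨e1, e2⟩ := P2b μ hμ hΛ' s
  obtain ⟨f1, f2⟩ := P3bs s
  have hc0 := cdev_bstar T p π r t s
  have hcmp := (cmp T p hp π hπ r b (T - 1 - t) t hcoh s).2
  unfold VarG Var
  rw [e1, f1, f2, hc0]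
  linarith [e2, hcmp]

end DOpt
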